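/- Let a = 2cos k₁, b = 2cos k₂, V > 0, and consider the 4×4 real symmetric matrix H = [[V,a,0,b],[a,−V,b,0],[0,b,V,a],[b,0,a,−V]]. Then det(H − λI) = [(λ² − V²) − (a² + b²)]² − 4a²b², and the eigenvalues of H are ±sqrt(V² + (a+b)²) and ±sqrt(V² + (a−b)²). -/

import Mathlib

/-- Characteristic polynomial and eigenvalues of the 4×4 fiber matrix of the
checkerboard operator with doubled period:
`det(H − λI) = ((λ² − V²) − (a² + b²))² − 4a²b²`, and the eigenvalues are
`±sqrt(V² + (a+b)²)` and `±sqrt(V² + (a−b)²)`. -/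
theorem stmt11 (V a b : ℝ) (hV : 0 < V) :
    (∀ lam : ℝ,
      Matrix.det
        (!![V, a, 0, b; a, -V, b, 0; 0, b, V, a; b, 0, a, -V]
          - lam • (1 : Matrix (Fin 4) (Fin 4) ℝ))
        = ((lam ^ 2 - V ^ 2) - (a ^ 2 + b ^ 2)) ^ 2 - 4 * a ^ 2 * b ^ 2) ∧
    (∀ lam : ℝ,
      Matrix.det
        (!![V, a, 0, b; a, -V, b, 0; 0, b, V, a; b, 0, a, -V]
          - lam • (1 : Matrix (Fin 4) (Fin 4) ℝ)) = 0 ↔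
        lam = Real.sqrt (V ^ 2 + (a + b) ^ 2) ∨ lam = -Real.sqrt (V ^ 2 + (a + b) ^ 2) ∨
        lam = Real.sqrt (V ^ 2 + (a - b) ^ 2) ∨ lam = -Real.sqrt (V ^ 2 + (a - b) ^ 2)) := by
  have hdet : ∀ lam : ℝ,
      Matrix.det
        (!![V, a, 0, b; a, -V, b, 0; 0, b, V, a; b, 0, a, -V]
          - lam • (1 : Matrix (Fin 4) (Fin 4) ℝ))
        = ((lam ^ 2 - V ^ 2) - (a ^ 2 + b ^ 2)) ^ 2 - 4 * a ^ 2 * b ^ 2 := by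
    intro lam
    have h : (!![V, a, 0, b; a, -V, b, 0; 0, b, V, a; b, 0, a, -V]
            - lam • (1 : Matrix (Fin 4) (Fin 4) ℝ))
        = !![V-lam, a, 0, b; a, -V-lam, b, 0; 0, b, V-lam, a; b, 0, a, -V-lam] := by
      ext i j
      fin_cases i <;> fin_cases j <;>
        simp [Matrix.one_apply, Matrix.sub_apply]
    rw [h]
    simp [Matrix.det_succ_row_zero, Fin.sum_univ_succ, Fin.succAbove,
      Matrix.cons_val_succ, show (Fin.castSucc 2 : Fin 4) = 2 from rfl]
    ring
  refine ⟨hdet, fun lam => ?_⟩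
  rw [hdet lam]
  have hs1 : 0 ≤ V ^ 2 + (a + b) ^ 2 := by positivity
  have hs2 : 0 ≤ V ^ 2 + (a - b) ^ 2 := by positivity
  have hq1 : Real.sqrt (V ^ 2 + (a + b) ^ 2) ^ 2 = V ^ 2 + (a + b) ^ 2 := Real.sq_sqrt hs1
  have hq2 : Real.sqrt (V ^ 2 + (a - b) ^ 2) ^ 2 = V ^ 2 + (a - b) ^ 2 := Real.sq_sqrt hs2
  constructor
  · intro h
    have hfac : (lam ^ 2 - (V ^ 2 + (a + b) ^ 2)) * (lam ^ 2 - (V ^ 2 + (a - b) ^ 2)) = 0 := by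
      nlinarith [h]
    rcases mul_eq_zero.mp hfac with h' | h'
    · have : lam ^ 2 = Real.sqrt (V ^ 2 + (a + b) ^ 2) ^ 2 := by rw [hq1]; linarith
      rcases sq_eq_sq_iff_eq_or_eq_neg.mp this with h | h
      · exact Or.inl h
      · exact Or.inr (Or.inl h)
    · have : lam ^ 2 = Real.sqrt (V ^ 2 + (a - b) ^ 2) ^ 2 := by rw [hq2]; linarith
      rcases sq_eq_sq_iff_eq_or_eq_neg.mp this with h | h
      · exact Or.inr (Or.inr (Or.inl h))
      · exact Or.inr (Or.inr (Or.inr h))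
  · rintro (rfl | rfl | rfl | rfl) <;> nlinarith [hq1, hq2]
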